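/- arXiv:2108.05231 — 8 statements merged into one kernel-verified Lean document; each statement's English description precedes it below -/
import Mathlib

section
/- There exists a partial computable function f : ℕ →. ℕ that has no total computable extension; that is, f is partial computable (Partrec f) and there is no computable function g : ℕ → ℕ such that for every n and y, f n = some y implies g n = y. -/
/-- **Shen & Vereshchagin.** There exists a partial computable function `f : ℕ →. ℕ`
that has no total computable extension: there is no computable `g : ℕ → ℕ` with
`g n = y` whenever `f n = some y`. -/
theorem exists_partrec_nat_without_total_computable_extension :
    ∃ f : ℕ →. ℕ, Partrec f ∧
      ¬ ∃ g : ℕ → ℕ, Computable g ∧ ∀ (n y : ℕ), f n = Part.some y → g n = y := by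
  refine ⟨fun n => (Nat.Partrec.Code.eval (Denumerable.ofNat Nat.Partrec.Code n) n).map
      Nat.succ, ?_, ?_⟩
  · exact Partrec.map
      (Nat.Partrec.Code.eval_part.comp (Computable.ofNat _) Computable.id)
      (Computable.succ.comp Computable.snd).to₂
  · rintro ⟨g, hg, hext⟩
    have : Nat.Partrec (g : ℕ →. ℕ) := Partrec.nat_iff.1 (Computable.partrec hg)
    obtain ⟨c, hc⟩ := Nat.Partrec.Code.exists_code.1 this
    set n := Encodable.encode c with hn
    have h1 : Nat.Partrec.Code.eval (Denumerable.ofNat Nat.Partrec.Code n) n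
        = Part.some (g n) := by
      rw [hn, Denumerable.ofNat_encode, hc]; rfl
    have h2 : g n = Nat.succ (g n) := by
      apply hext
      simp only [h1, Part.map_some]
    omega
end

section
/- There exists a partial computable function f : ℕ →. Bool that has no total computable extension; that is, f is partial computable (Partrec f) and there is no computable function g : ℕ → Bool such that for every n and b, f n = some b implies g n = b. -/
open Nat.Partrec (Code)

/-- There exists a partial computable function `f : ℕ →. Bool` that has no total
computable extension: there is no computable `g : ℕ → Bool` with `g n = b`
whenever `f n = some b`. -/
theorem exists_partrec_bool_without_total_computable_extension :
    ∃ f : ℕ →. Bool, Partrec f ∧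
      ¬ ∃ g : ℕ → Bool, Computable g ∧ ∀ (n : ℕ) (b : Bool), f n = Part.some b → g n = b := by
  refine ⟨fun n => ((Denumerable.ofNat Code n).eval n).map (fun m => decide (m = 0)), ?_, ?_⟩
  · have h1 : Partrec (fun n => (Denumerable.ofNat Code n).eval n) :=
      Nat.Partrec.Code.eval_part.comp (Computable.ofNat Code) Computable.id
    exact h1.map ((Primrec.eq.comp Primrec.snd (Primrec.const 0)).decide.to_comp).to₂
  · rintro ⟨g, hg, hext⟩
    have hh : Computable (fun n => Encodable.encode (g n)) := Computable.encode.comp hg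
    have hnp : Nat.Partrec (fun n => Encodable.encode (g n) : ℕ →. ℕ) :=
      Partrec.nat_iff.mp hh.partrec
    obtain ⟨c, hc⟩ := Nat.Partrec.Code.exists_code.mp hnp
    set n := Encodable.encode c with hn
    have he : (Denumerable.ofNat Code n).eval n = Part.some (Encodable.encode (g n)) := by
      simp [hn, hc]
    have := hext n (decide (Encodable.encode (g n) = 0)) (by simp [he])
    cases hgn : g n <;> simp [hgn] at this
end

section
/- For every n, m, i, j with m ≤ i and m ≤ j, one has |C n i - C n j| ≤ 2^{-m} and |D n i - D n j| ≤ 2^{-m}; that is, for each fixed n the sequences k ↦ C n k and k ↦ D n k are Cauchy sequences of rationals with the identity function as modulus (regulator), so each determines a constructive real number. -/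
open Nat.Partrec (Code)
open Nat.Partrec.Code

/-- The rational sequence `C`: if `f` (computed by code `e`) halts on input `n` by step `k`,
with least halting step `m`, then `C n k = 1 - 2⁻ᵐ` if the output was `false`,
and `1` otherwise (in particular, if the output was `true`); if it has not halted
within `k` steps, then `C n k = 1`. -/
def Cq (e : Code) (n k : ℕ) : ℚ :=
  if h : ∃ m, m ≤ k ∧ (evaln m e n).isSome then
    if evaln (Nat.find h) e n = some (Encodable.encode false) then
      1 - (2 : ℚ)⁻¹ ^ (Nat.find h)
    else 1
  else 1

/-- The rational sequence `D`: symmetric to `C`, with the roles of the outputs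
`true` and `false` swapped. -/
def Dq (e : Code) (n k : ℕ) : ℚ :=
  if h : ∃ m, m ≤ k ∧ (evaln m e n).isSome then
    if evaln (Nat.find h) e n = some (Encodable.encode true) then
      1 - (2 : ℚ)⁻¹ ^ (Nat.find h)
    else 1
  else 1

/-- `C∞ n`, the real limit of the sequence `k ↦ C n k`. -/
noncomputable def Cinf (e : Code) (n : ℕ) : ℝ :=
  Filter.limUnder Filter.atTop fun k => ((Cq e n k : ℝ))

/-- `D∞ n`, the real limit of the sequence `k ↦ D n k`. -/
noncomputable def Dinf (e : Code) (n : ℕ) : ℝ :=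
  Filter.limUnder Filter.atTop fun k => ((Dq e n k : ℝ))


def Gq (e : Code) (b : Bool) (n k : ℕ) : ℚ :=
  if h : ∃ m, m ≤ k ∧ (evaln m e n).isSome then
    if evaln (Nat.find h) e n = some (Encodable.encode b) then
      1 - (2 : ℚ)⁻¹ ^ (Nat.find h)
    else 1
  else 1

lemma find_eq_find (e : Code) (n k : ℕ) (h : ∃ m, m ≤ k ∧ (evaln m e n).isSome)
    (h0 : ∃ m, (evaln m e n).isSome) : Nat.find h = Nat.find h0 := by
  have h1 : Nat.find h0 ≤ Nat.find h := Nat.find_le (Nat.find_spec h).2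
  exact le_antisymm (Nat.find_le ⟨h1.trans (Nat.find_spec h).1, Nat.find_spec h0⟩) h1

lemma pow_half_le {N m : ℕ} (hm : m ≤ N) : (2 : ℚ)⁻¹ ^ N ≤ (2 : ℚ)⁻¹ ^ m :=
  pow_le_pow_of_le_one (by norm_num) (by norm_num) hm

lemma gq_bound (e : Code) (b : Bool) (n m i j : ℕ) (hi : m ≤ i) (hj : m ≤ j) :
    |Gq e b n i - Gq e b n j| ≤ (2 : ℚ)⁻¹ ^ m := by
  have hpos : (0:ℚ) ≤ (2 : ℚ)⁻¹ ^ m := by positivity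
  unfold Gq
  by_cases hI : ∃ m, m ≤ i ∧ (evaln m e n).isSome
  · have h0 : ∃ m, (evaln m e n).isSome := ⟨hI.choose, hI.choose_spec.2⟩
    by_cases hJ : ∃ m, m ≤ j ∧ (evaln m e n).isSome
    · rw [dif_pos hI, dif_pos hJ, find_eq_find e n i hI h0, find_eq_find e n j hJ h0,
        sub_self, abs_zero]
      exact hpos
    · rw [dif_pos hI, dif_neg hJ]
      have hN : j < Nat.find hI := by
        by_contra hle
        exact hJ ⟨Nat.find hI, le_of_not_gt hle, (Nat.find_spec hI).2⟩
      have hle : (2 : ℚ)⁻¹ ^ (Nat.find hI) ≤ (2 : ℚ)⁻¹ ^ m :=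
        pow_half_le (le_of_lt (lt_of_le_of_lt hj hN))
      split
      · rw [sub_sub_cancel_left, abs_neg, abs_of_nonneg (by positivity)]
        exact hle
      · simp [hpos]
  · by_cases hJ : ∃ m, m ≤ j ∧ (evaln m e n).isSome
    · have h0 : ∃ m, (evaln m e n).isSome := ⟨hJ.choose, hJ.choose_spec.2⟩
      rw [dif_neg hI, dif_pos hJ]
      have hN : i < Nat.find hJ := by
        by_contra hle
        exact hI ⟨Nat.find hJ, le_of_not_gt hle, (Nat.find_spec hJ).2⟩
      have hle : (2 : ℚ)⁻¹ ^ (Nat.find hJ) ≤ (2 : ℚ)⁻¹ ^ m :=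
        pow_half_le (le_of_lt (lt_of_le_of_lt hi hN))
      split
      · rw [sub_sub_cancel, abs_of_nonneg (by positivity)]
        exact hle
      · simp [hpos]
    · rw [dif_neg hI, dif_neg hJ, sub_self, abs_zero]
      exact hpos

/-- For each fixed `n`, the sequences `k ↦ C n k` and `k ↦ D n k` are Cauchy sequences
of rationals with the identity function as modulus (regulator): for `m ≤ i` and `m ≤ j`,
`|C n i - C n j| ≤ 2⁻ᵐ` and `|D n i - D n j| ≤ 2⁻ᵐ`. Hence each determines a
constructive real number. -/
theorem cq_dq_cauchy_with_identity_modulus (f : ℕ →. Bool) (hf : Partrec f) (e : Code)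
    (he : ∀ (n : ℕ) (b : Bool), b ∈ f n ↔ ∃ k, evaln k e n = some (Encodable.encode b)) :
    ∀ (n m i j : ℕ), m ≤ i → m ≤ j →
      |Cq e n i - Cq e n j| ≤ (2 : ℚ)⁻¹ ^ m ∧ |Dq e n i - Dq e n j| ≤ (2 : ℚ)⁻¹ ^ m := by
  intro n m i j hi hj
  exact ⟨gq_bound e false n m i j hi hj, gq_bound e true n m i j hi hj⟩
end

section
/- For every n: if f n = some false then C∞ n < D∞ n; if f n = some true then D∞ n < C∞ n; and if n is not in the domain of f then C∞ n = D∞ n. -/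
open Nat.Partrec (Code)
open Nat.Partrec.Code

lemma find_shift (e : Code) (n : ℕ) (hinf : ∃ m, (evaln m e n).isSome)
    {k : ℕ} (hk : Nat.find hinf ≤ k)
    (h : ∃ m, m ≤ k ∧ (evaln m e n).isSome) : Nat.find h = Nat.find hinf := by
  apply le_antisymm
  · exact Nat.find_le ⟨hk, Nat.find_spec hinf⟩
  · exact Nat.find_le (Nat.find_spec h).2

lemma Cq_eq_of_halts (e : Code) (n : ℕ) (hinf : ∃ m, (evaln m e n).isSome)
    {k : ℕ} (hk : Nat.find hinf ≤ k) :
    Cq e n k = if evaln (Nat.find hinf) e n = some (Encodable.encode false) then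
      1 - (2 : ℚ)⁻¹ ^ (Nat.find hinf) else 1 := by
  have h : ∃ m, m ≤ k ∧ (evaln m e n).isSome := ⟨_, hk, Nat.find_spec hinf⟩
  rw [Cq, dif_pos h, find_shift e n hinf hk h]

lemma Dq_eq_of_halts (e : Code) (n : ℕ) (hinf : ∃ m, (evaln m e n).isSome)
    {k : ℕ} (hk : Nat.find hinf ≤ k) :
    Dq e n k = if evaln (Nat.find hinf) e n = some (Encodable.encode true) then
      1 - (2 : ℚ)⁻¹ ^ (Nat.find hinf) else 1 := by
  have h : ∃ m, m ≤ k ∧ (evaln m e n).isSome := ⟨_, hk, Nat.find_spec hinf⟩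
  rw [Dq, dif_pos h, find_shift e n hinf hk h]

lemma limUnder_eventually_const (g : ℕ → ℚ) (a : ℚ)
    (h : ∀ᶠ k in Filter.atTop, g k = a) :
    Filter.limUnder Filter.atTop (fun k => ((g k : ℝ))) = (a : ℝ) := by
  apply Filter.Tendsto.limUnder_eq
  apply Filter.Tendsto.congr' _ tendsto_const_nhds
  filter_upwards [h] with k hk
  rw [hk]

lemma evaln_find_eq (e : Code) (n : ℕ) (b : Bool) {k0 : ℕ}
    (hk0 : evaln k0 e n = some (Encodable.encode b))
    (hinf : ∃ m, (evaln m e n).isSome) :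
    evaln (Nat.find hinf) e n = some (Encodable.encode b) := by
  obtain ⟨v, hv⟩ := Option.isSome_iff_exists.mp (Nat.find_spec hinf)
  have h2 : v ∈ evaln (max (Nat.find hinf) k0) e n :=
    evaln_mono (le_max_left _ _) (Option.mem_def.mpr hv)
  have h3 : Encodable.encode b ∈ evaln (max (Nat.find hinf) k0) e n :=
    evaln_mono (le_max_right _ _) (Option.mem_def.mpr hk0)
  rw [hv, Option.mem_unique h2 h3]

/-- For every `n`: if `f n = some false` then `C∞ n < D∞ n`; if `f n = some true`
then `D∞ n < C∞ n`; and if `n` is not in the domain of `f` then `C∞ n = D∞ n`. -/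
theorem cinf_dinf_comparison (f : ℕ →. Bool) (hf : Partrec f) (e : Code)
    (he : ∀ (n : ℕ) (b : Bool), b ∈ f n ↔ ∃ k, evaln k e n = some (Encodable.encode b)) :
    ∀ n : ℕ,
      (f n = Part.some false → Cinf e n < Dinf e n) ∧
      (f n = Part.some true → Dinf e n < Cinf e n) ∧
      (¬ (f n).Dom → Cinf e n = Dinf e n) := by
  intro n
  refine ⟨?_, ?_, ?_⟩
  · intro hfn
    have hb : false ∈ f n := by rw [hfn]; exact Part.mem_some _
    obtain ⟨k0, hk0⟩ := (he n false).1 hb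
    have hinf : ∃ m, (evaln m e n).isSome := ⟨k0, by rw [hk0]; rfl⟩
    have hm₀ := evaln_find_eq e n false hk0 hinf
    have hC : Cinf e n = ((1 - (2 : ℚ)⁻¹ ^ (Nat.find hinf) : ℚ) : ℝ) := by
      apply limUnder_eventually_const
      filter_upwards [Filter.eventually_ge_atTop (Nat.find hinf)] with k hk
      rw [Cq_eq_of_halts e n hinf hk, if_pos hm₀]
    have hD : Dinf e n = ((1 : ℚ) : ℝ) := by
      apply limUnder_eventually_const
      filter_upwards [Filter.eventually_ge_atTop (Nat.find hinf)] with k hk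
      rw [Dq_eq_of_halts e n hinf hk, if_neg (by rw [hm₀]; simp)]
    rw [hC, hD]
    push_cast
    have : (0 : ℝ) < (2 : ℝ)⁻¹ ^ (Nat.find hinf) := by positivity
    linarith
  · intro hfn
    have hb : true ∈ f n := by rw [hfn]; exact Part.mem_some _
    obtain ⟨k0, hk0⟩ := (he n true).1 hb
    have hinf : ∃ m, (evaln m e n).isSome := ⟨k0, by rw [hk0]; rfl⟩
    have hm₀ := evaln_find_eq e n true hk0 hinf
    have hD : Dinf e n = ((1 - (2 : ℚ)⁻¹ ^ (Nat.find hinf) : ℚ) : ℝ) := by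
      apply limUnder_eventually_const
      filter_upwards [Filter.eventually_ge_atTop (Nat.find hinf)] with k hk
      rw [Dq_eq_of_halts e n hinf hk, if_pos hm₀]
    have hC : Cinf e n = ((1 : ℚ) : ℝ) := by
      apply limUnder_eventually_const
      filter_upwards [Filter.eventually_ge_atTop (Nat.find hinf)] with k hk
      rw [Cq_eq_of_halts e n hinf hk, if_neg (by rw [hm₀]; simp)]
    rw [hC, hD]
    push_cast
    have : (0 : ℝ) < (2 : ℝ)⁻¹ ^ (Nat.find hinf) := by positivity
    linarith
  · intro hdom
    have key : ∀ k, Cq e n k = Dq e n k := by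
      intro k
      rw [Cq, Dq]
      split
      · next h =>
        have hne : ∀ b : Bool, evaln (Nat.find h) e n ≠ some (Encodable.encode b) := by
          intro b hb
          exact hdom (Part.dom_iff_mem.mpr ⟨b, (he n b).2 ⟨_, hb⟩⟩)
        rw [if_neg (hne false), if_neg (hne true)]
      · rfl
    unfold Cinf Dinf
    congr 1
    funext k
    rw [key]
end

section
/- Suppose f has no total computable extension. Then there is no computable function g : ℕ → Bool such that for all n, (g n = false → C∞ n ≤ D∞ n) and (g n = true → D∞ n ≤ C∞ n); that is, no algorithm can uniformly select the smaller of the two constructive reals C∞ n and D∞ n. -/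
open Nat.Partrec (Code)
open Nat.Partrec.Code

lemma find_eq_of_le {e : Code} {n k : ℕ} (h : ∃ m, (evaln m e n).isSome)
    (hk : Nat.find h ≤ k) (h' : ∃ m, m ≤ k ∧ (evaln m e n).isSome) :
    Nat.find h' = Nat.find h := by
  apply le_antisymm
  · exact Nat.find_le ⟨hk, Nat.find_spec h⟩
  · exact Nat.find_le (Nat.find_spec h').2

lemma Cq_eventual {e : Code} {n : ℕ} (h : ∃ m, (evaln m e n).isSome)
    {k : ℕ} (hk : Nat.find h ≤ k) :
    Cq e n k = if evaln (Nat.find h) e n = some (Encodable.encode false) then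
      1 - (2 : ℚ)⁻¹ ^ (Nat.find h) else 1 := by
  have h' : ∃ m, m ≤ k ∧ (evaln m e n).isSome := ⟨Nat.find h, hk, Nat.find_spec h⟩
  rw [Cq, dif_pos h', find_eq_of_le h hk h']

lemma Dq_eventual {e : Code} {n : ℕ} (h : ∃ m, (evaln m e n).isSome)
    {k : ℕ} (hk : Nat.find h ≤ k) :
    Dq e n k = if evaln (Nat.find h) e n = some (Encodable.encode true) then
      1 - (2 : ℚ)⁻¹ ^ (Nat.find h) else 1 := by
  have h' : ∃ m, m ≤ k ∧ (evaln m e n).isSome := ⟨Nat.find h, hk, Nat.find_spec h⟩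
  rw [Dq, dif_pos h', find_eq_of_le h hk h']

lemma limUnder_eventually_const_s9 {u : ℕ → ℝ} {a : ℝ} {N : ℕ}
    (hu : ∀ k ≥ N, u k = a) : Filter.limUnder Filter.atTop u = a := by
  apply Filter.Tendsto.limUnder_eq (x := a)
  apply Filter.Tendsto.congr' _ tendsto_const_nhds
  filter_upwards [Filter.eventually_atTop.2 ⟨N, hu⟩] with k hk
  exact hk.symm

/-- If `f` has no total computable extension, then no computable `g : ℕ → Bool` can
uniformly select the smaller of the two constructive reals `C∞ n` and `D∞ n`:
there is no computable `g` with `g n = false → C∞ n ≤ D∞ n` and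
`g n = true → D∞ n ≤ C∞ n` for all `n`. -/
theorem no_computable_selector (f : ℕ →. Bool) (hf : Partrec f) (e : Code)
    (he : ∀ (n : ℕ) (b : Bool), b ∈ f n ↔ ∃ k, evaln k e n = some (Encodable.encode b))
    (hext : ¬ ∃ g : ℕ → Bool, Computable g ∧
      ∀ (n : ℕ) (b : Bool), f n = Part.some b → g n = b) :
    ¬ ∃ g : ℕ → Bool, Computable g ∧
      ∀ n : ℕ, (g n = false → Cinf e n ≤ Dinf e n) ∧ (g n = true → Dinf e n ≤ Cinf e n) := by
  rintro ⟨g, hg, hsel⟩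
  apply hext
  refine ⟨g, hg, fun n b hb => ?_⟩
  have hbmem : b ∈ f n := by rw [hb]; exact Part.mem_some b
  obtain ⟨k, hk⟩ := (he n b).1 hbmem
  have h : ∃ m, (evaln m e n).isSome := ⟨k, by rw [hk]; rfl⟩
  set m0 := Nat.find h with hm0
  -- the value at m0 is encode b
  have hsome : (evaln m0 e n).isSome := Nat.find_spec h
  obtain ⟨v, hv⟩ := Option.isSome_iff_exists.1 hsome
  have hvb : v = Encodable.encode b := by
    rcases le_total m0 k with hle | hle
    · have := evaln_mono hle hv
      rw [hk] at this; exact (Option.mem_some_iff.1 this).symm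
    · have hm0k : m0 ≤ k := Nat.find_le (by rw [hk]; rfl)
      have := evaln_mono hm0k hv
      rw [hk] at this; exact (Option.mem_some_iff.1 this).symm
  rw [hvb] at hv
  have hpos : (0:ℝ) < (2 : ℝ)⁻¹ ^ m0 := by positivity
  cases b with
  | true =>
    -- evaln m0 e n = some 1; so Cq k = 1 eventually, Dq k = 1 - 2⁻¹^m0 eventually
    have hc : Cinf e n = 1 := by
      apply limUnder_eventually_const_s9 (N := m0)
      intro k hk'
      rw [Cq_eventual h hk', if_neg]
      · norm_num
      · rw [hv]; simp
    have hd : Dinf e n = 1 - (2:ℝ)⁻¹ ^ m0 := by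
      apply limUnder_eventually_const_s9 (N := m0)
      intro k hk'
      rw [Dq_eventual h hk', if_pos hv]
      push_cast; ring
    by_contra hgn
    have hgf : g n = false := by cases hgn' : g n <;> simp_all
    have := (hsel n).1 hgf
    rw [hc, hd] at this
    linarith
  | false =>
    have hd : Dinf e n = 1 := by
      apply limUnder_eventually_const_s9 (N := m0)
      intro k hk'
      rw [Dq_eventual h hk', if_neg]
      · norm_num
      · rw [hv]; simp
    have hc : Cinf e n = 1 - (2:ℝ)⁻¹ ^ m0 := by
      apply limUnder_eventually_const_s9 (N := m0)
      intro k hk'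
      rw [Cq_eventual h hk', if_pos hv]
      push_cast; ring
    by_contra hgn
    have hgf : g n = true := by cases hgn' : g n <;> simp_all
    have := (hsel n).2 hgf
    rw [hc, hd] at this
    linarith
end

section
/- There exist a partial computable function f : ℕ →. Bool and a computable family of pairs of rational Cauchy sequences (k ↦ C n k, k ↦ D n k), each Cauchy with the identity modulus (|C n i - C n j| ≤ 2^{-m} and |D n i - D n j| ≤ 2^{-m} whenever m ≤ i and m ≤ j), with real limits C∞ n and D∞ n, such that no computable function g : ℕ → Bool satisfies, for all n, (g n = false → C∞ n ≤ D∞ n) and (g n = true → D∞ n ≤ C∞ n). -/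
namespace CCF
open Encodable Denumerable

/-! ### Encoding of `ℚ` -/

abbrev eQ : ℚ → ℕ := @Encodable.encode ℚ Rat.instEncodable

lemma eQ_def (q : ℚ) : eQ q = Nat.pair (Encodable.encode q.num) q.den := by
  show @Encodable.encode ℚ Rat.instEncodable q = _
  unfold Rat.instEncodable
  rw [Encodable.encode_ofEquiv]
  rfl

def A : ℕ → ℕ := fun a => a / 2 + a % 2

lemma A_enc (z : ℤ) : A (Encodable.encode z) = z.natAbs := by
  show A (Equiv.intEquivNat z) = z.natAbs
  cases z with
  | ofNat n =>
      simp only [Equiv.intEquivNat, Equiv.intEquivNatSumNat, Equiv.natSumNatEquivNat,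
        Equiv.trans_apply, Equiv.coe_fn_mk, Equiv.coe_fn_symm_mk]
      show A (Function.uncurry Nat.bit (false, n)) = n
      simp [Nat.bit, A, Nat.mul_add_mod]
  | negSucc n =>
      simp only [Equiv.intEquivNat, Equiv.intEquivNatSumNat, Equiv.natSumNatEquivNat,
        Equiv.trans_apply, Equiv.coe_fn_mk, Equiv.coe_fn_symm_mk]
      show A (Function.uncurry Nat.bit (true, n)) = n + 1
      simp [Nat.bit, A, Nat.mul_add_mod]
      omega

def pQ : ℕ → Prop := fun n => 0 < n.unpair.2 ∧ Nat.Coprime (A n.unpair.1) n.unpair.2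

instance : DecidablePred pQ := fun n => by unfold pQ Nat.Coprime; infer_instance

lemma range_eQ : Set.range eQ = setOf pQ := by
  ext n
  constructor
  · rintro ⟨q, rfl⟩
    rw [eQ_def]
    exact ⟨by simp [pQ, q.pos], by simpa [pQ, A_enc] using q.reduced⟩
  · rintro ⟨hd, hc⟩
    set z : ℤ := Equiv.intEquivNat.symm n.unpair.1 with hz
    have hez : Encodable.encode z = n.unpair.1 := by
      show Equiv.intEquivNat _ = _; exact Equiv.apply_symm_apply _ _
    have hco : z.natAbs.Coprime n.unpair.2 := by rwa [← A_enc z, hez]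
    refine ⟨⟨z, n.unpair.2, Nat.pos_iff_ne_zero.mp hd, hco⟩, ?_⟩
    rw [eQ_def]
    show Nat.pair (Encodable.encode z) n.unpair.2 = n
    rw [hez, Nat.pair_unpair]

instance : Infinite (Set.range (@Encodable.encode ℚ Rat.instEncodable)) :=
  (Set.infinite_range_of_injective Encodable.encode_injective).to_subtype

lemma subtype_ofNat_eq (s : Set ℕ) [DecidablePred (· ∈ s)] [Infinite s] (m : ℕ) :
    @Denumerable.ofNat s (Nat.Subtype.denumerable s) m = Nat.Subtype.ofNat s m := by
  unfold Nat.Subtype.denumerable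
  rw [Denumerable.ofEquiv_ofNat, Denumerable.ofNat_nat]
  rfl

lemma ofNatQ_eq (m : ℕ) :
    Denumerable.ofNat ℚ m =
      (@Encodable.equivRangeEncode ℚ Rat.instEncodable).symm
        (@Nat.Subtype.ofNat (Set.range (@Encodable.encode ℚ Rat.instEncodable))
          (Encodable.decidableRangeEncode ℚ) _ m) := by
  show @Denumerable.ofNat ℚ Rat.instDenumerable m = _
  unfold Rat.instDenumerable Denumerable.ofEncodableOfInfinite
  rw [Denumerable.ofEquiv_ofNat]
  rw [subtype_ofNat_eq]

lemma subtype_ofNat_congr (s : Set ℕ) (i1 i2 : DecidablePred (· ∈ s)) [Infinite s] (m : ℕ) :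
    @Nat.Subtype.ofNat s i1 _ m = @Nat.Subtype.ofNat s i2 _ m := by
  rw [Subsingleton.elim i1 i2]

lemma coe_subtype_ofNat_eq_nth (s : Set ℕ) [inst : DecidablePred (· ∈ s)] [Infinite s] (m : ℕ) :
    (Nat.Subtype.ofNat s m : ℕ) = Nat.nth (· ∈ s) m := by
  have hf : (setOf (· ∈ s)).Infinite := by
    rw [show setOf (· ∈ s) = s from rfl, ← Set.infinite_coe_iff]; infer_instance
  rw [Nat.nth_apply_eq_orderIsoOfNat hf]
  unfold Nat.Subtype.orderIsoOfNat
  exact congrArg Subtype.val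
    (subtype_ofNat_congr s inst (fun a => Classical.propDecidable _) m)

lemma pQ_eQ (q : ℚ) : pQ (eQ q) := by
  have : eQ q ∈ Set.range eQ := ⟨q, rfl⟩
  rwa [range_eQ] at this

lemma ofNat_cnt (q : ℚ) : Denumerable.ofNat ℚ (Nat.count pQ (eQ q)) = q := by
  rw [ofNatQ_eq]
  rw [Equiv.symm_apply_eq]
  apply Subtype.ext
  rw [coe_subtype_ofNat_eq_nth]
  have hps : (fun x => x ∈ Set.range eQ) = pQ := by
    funext x
    exact propext ⟨fun h => by rw [range_eQ] at h; exact h,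
      fun h => by rw [range_eQ]; exact h⟩
  show Nat.nth (fun x => x ∈ Set.range eQ) (Nat.count pQ (eQ q)) = eQ q
  rw [hps]
  exact Nat.nth_count (pQ_eQ q)

/-! ### gcd and count are primrec -/

def gstep : ℕ × ℕ → ℕ × ℕ := fun p => if p.1 = 0 then p else (p.2 % p.1, p.1)

lemma gstep_iter : ∀ n (p : ℕ × ℕ), p.1 ≤ n → (gstep^[n] p).2 = Nat.gcd p.1 p.2 := by
  intro n
  induction n with
  | zero => rintro ⟨a, b⟩ h; interval_cases a; simp [Nat.gcd]
  | succ n ih =>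
      rintro ⟨a, b⟩ h
      rw [Function.iterate_succ_apply]
      by_cases ha : a = 0
      · subst ha
        have : gstep (0, b) = (0, b) := by simp [gstep]
        rw [this, ih (0, b) (by omega)]
      · have hst : gstep (a, b) = (b % a, a) := by simp [gstep, ha]
        rw [hst, ih _ (by
          have := Nat.mod_lt b (show 0 < a by omega)
          simpa using by omega)]
        exact (Nat.gcd_rec a b).symm

lemma primrec_gstep : Primrec gstep := by
  unfold gstep
  exact Primrec.ite (Primrec.eq.comp Primrec.fst (Primrec.const 0)) Primrec.id
    (Primrec.pair (Primrec.nat_mod.comp Primrec.snd Primrec.fst) Primrec.fst)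

lemma primrec_iter_gstep : Primrec₂ fun (n : ℕ) (p : ℕ × ℕ) => gstep^[n] p := by
  have h := Primrec.nat_rec (f := fun p : ℕ × ℕ => p)
    (g := fun (_ : ℕ × ℕ) (q : ℕ × (ℕ × ℕ)) => gstep q.2)
    Primrec.id ((primrec_gstep.comp Primrec.snd).comp₂ Primrec₂.right)
  have := h.comp Primrec.snd Primrec.fst
  refine this.to₂.of_eq ?_
  intro n p
  simp only []
  induction n with
  | zero => rfl
  | succ m ih => rw [Function.iterate_succ_apply']; exact congrArg gstep ih

lemma primrec_gcd : Primrec₂ Nat.gcd := by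
  have : Primrec₂ fun (a b : ℕ) => (gstep^[a] (a, b)).2 :=
    (Primrec.snd.comp
      (primrec_iter_gstep.comp Primrec.fst (Primrec.pair Primrec.fst Primrec.snd))).to₂
  exact this.of_eq fun a b => gstep_iter a (a, b) le_rfl

lemma primrec_count (p : ℕ → Prop) [DecidablePred p] (hp : PrimrecPred p) :
    Primrec (Nat.count p) := by
  have hstep : Primrec₂ (fun (m ih : ℕ) => ih + if p m then 1 else 0) :=
    (Primrec.nat_add.comp Primrec.snd
      (Primrec.ite (hp.comp Primrec.fst) (Primrec.const 1) (Primrec.const 0))).to₂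
  have h := Primrec.nat_rec₁ (f := fun (m ih : ℕ) => ih + if p m then 1 else 0) 0 hstep
  refine h.of_eq ?_
  intro n
  induction n with
  | zero => simp
  | succ m ih => rw [Nat.count_succ, ← ih]

lemma primrec_pQ : PrimrecPred pQ := by
  have hA : Primrec A :=
    Primrec.nat_add.comp (Primrec.nat_div.comp Primrec.id (Primrec.const 2))
      (Primrec.nat_mod.comp Primrec.id (Primrec.const 2))
  have h1 : Primrec (fun n : ℕ => n.unpair.1) := Primrec.fst.comp Primrec.unpair
  have h2 : Primrec (fun n : ℕ => n.unpair.2) := Primrec.snd.comp Primrec.unpair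
  exact PrimrecPred.and (Primrec.nat_lt.comp (Primrec.const 0) h2)
    (Primrec.eq.comp (primrec_gcd.comp (hA.comp h1) h2) (Primrec.const 1))

/-- Key bridge: a `ℚ`-valued function is computable if the `Rat.instEncodable`-encoding
of its values is primrec. -/
lemma computable_of_primrec_eQ {α : Type*} [Primcodable α] {f : α → ℚ}
    (h : Primrec fun a => eQ (f a)) : Computable f := by
  have h2 : Primrec fun a => Nat.count pQ (eQ (f a)) := (primrec_count pQ primrec_pQ).comp h
  have h3 : Primrec fun a => Denumerable.ofNat ℚ (Nat.count pQ (eQ (f a))) :=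
    (Primrec.ofNat ℚ).comp h2
  exact (h3.of_eq fun a => ofNat_cnt (f a)).to_comp

/-! ### The sequences -/

open Nat.Partrec (Code)

def ev (n k : ℕ) : Option ℕ := Nat.Partrec.Code.evaln k (Denumerable.ofNat Code n) n

lemma primrec_ev : Primrec₂ ev := by
  have := Nat.Partrec.Code.primrec_evaln
  exact (this.comp (Primrec.pair
    (Primrec.pair Primrec.snd ((Primrec.ofNat Code).comp Primrec.fst)) Primrec.fst)).to₂

instance (n : ℕ) : DecidablePred (fun t => ev n t = none) := fun t => by infer_instance

def qc (n k : ℕ) : ℕ := Nat.count (fun t => ev n t = none) (k + 1)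

lemma primrec_ev_none : PrimrecPred fun p : ℕ × ℕ => ev p.1 p.2 = none :=
  Primrec.eq.comp (primrec_ev.comp Primrec.fst Primrec.snd) (Primrec.const none)

lemma primrec_qc : Primrec₂ qc := by
  have hδ : Primrec₂ fun (n t : ℕ) => (if ev n t = none then 1 else 0 : ℕ) :=
    (Primrec.ite primrec_ev_none (Primrec.const 1) (Primrec.const 0)).to₂
  have h := Primrec.nat_rec (f := fun n : ℕ => (if ev n 0 = none then 1 else 0 : ℕ))
    (g := fun (n : ℕ) (q : ℕ × ℕ) => q.2 + if ev n (q.1 + 1) = none then 1 else 0)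
    (hδ.comp Primrec.id (Primrec.const 0))
    ((Primrec.nat_add.comp (Primrec.snd.comp Primrec.snd)
      (hδ.comp Primrec.fst
        (Primrec.succ.comp (Primrec.fst.comp Primrec.snd)))).to₂)
  refine h.of_eq ?_
  intro n k
  induction k with
  | zero => simp [qc, Nat.count_succ, Nat.count_zero, Nat.add_comm]
  | succ m ih =>
      show (Nat.rec _ _ m : ℕ) + (if ev n (m + 1) = none then 1 else 0) = qc n (m + 1)
      rw [ih, qc, qc, Nat.count_succ, Nat.count_succ, Nat.count_succ]

def CC (n k : ℕ) : ℚ :=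
  match ev n k with
  | none => 0
  | some v => (if v = 0 then 1 else -1) * (2 : ℚ)⁻¹ ^ qc n k

def E : ℕ × ℕ → ℕ := fun p =>
  match ev p.1 p.2 with
  | none => Nat.pair 0 1
  | some v => Nat.pair (if v = 0 then 2 else 1) (2 ^ qc p.1 p.2)

lemma enc_int_zero : Encodable.encode (0 : ℤ) = 0 := by decide
lemma enc_int_one : Encodable.encode (1 : ℤ) = 2 := by decide
lemma enc_int_negone : Encodable.encode (-1 : ℤ) = 1 := by decide

lemma num_inv_pow (t : ℕ) : ((2:ℚ)⁻¹ ^ t).num = 1 := by rw [Rat.num_pow]; norm_num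
lemma den_inv_pow (t : ℕ) : ((2:ℚ)⁻¹ ^ t).den = 2 ^ t := by rw [Rat.den_pow]; norm_num

lemma eQ_CC (n k : ℕ) : eQ (CC n k) = E (n, k) := by
  rcases hov : ev n k with _ | v
  · have hc : CC n k = 0 := by simp only [CC, hov]
    have hE : E (n, k) = Nat.pair 0 1 := by simp only [E, hov]
    rw [hc, hE, eQ_def]
    norm_num [enc_int_zero]
  · by_cases hv : v = 0
    · have hc : CC n k = (2:ℚ)⁻¹ ^ qc n k := by simp only [CC, hov]; simp [hv]
      have hE : E (n, k) = Nat.pair 2 (2 ^ qc n k) := by simp only [E, hov]; simp [hv]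
      rw [hc, hE, eQ_def, num_inv_pow, den_inv_pow, enc_int_one]
    · have hc : CC n k = -((2:ℚ)⁻¹ ^ qc n k) := by
        simp only [CC, hov]; simp [hv]
      have hE : E (n, k) = Nat.pair 1 (2 ^ qc n k) := by simp only [E, hov]; simp [hv]
      rw [hc, hE, eQ_def, Rat.neg_den, Rat.neg_num, num_inv_pow, den_inv_pow]
      norm_num [enc_int_negone]

lemma primrec_pow2 : Primrec fun t : ℕ => 2 ^ t := by
  have : Primrec₂ (fun (a b : ℕ) => a ^ b) := Primrec₂.unpaired'.mp Nat.Primrec.pow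
  exact this.comp (Primrec.const 2) Primrec.id

lemma primrec_E : Primrec E := by
  have hqc : Primrec fun p : (ℕ × ℕ) × ℕ => qc p.1.1 p.1.2 :=
    primrec_qc.comp (Primrec.fst.comp Primrec.fst) (Primrec.snd.comp Primrec.fst)
  have h := Primrec.option_casesOn (primrec_ev.comp Primrec.fst Primrec.snd)
    (Primrec.const (Nat.pair 0 1))
    ((Primrec₂.natPair.comp
      (Primrec.ite (Primrec.eq.comp Primrec.snd (Primrec.const 0))
        (Primrec.const 2) (Primrec.const 1))
      (primrec_pow2.comp hqc)).to₂)
  refine h.of_eq ?_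
  intro p
  rcases hov : ev p.1 p.2 with _ | v <;> simp [E, hov]

lemma computable_CC : Computable fun p : ℕ × ℕ => CC p.1 p.2 := by
  apply computable_of_primrec_eQ
  exact primrec_E.of_eq fun p => (eQ_CC p.1 p.2).symm

/-! ### Analysis of the sequences -/

def Halts (n : ℕ) : Prop := ∃ t, (ev n t).isSome

open scoped Classical in
noncomputable def Cq (n : ℕ) : ℚ := if h : Halts n then CC n (Nat.find h) else 0

section analysis

variable {n : ℕ}

lemma ev_stable (h : Halts n) {k : ℕ} (hk : Nat.find h ≤ k) :
    ev n k = ev n (Nat.find h) := by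
  obtain ⟨v, hv⟩ := Option.isSome_iff_exists.mp (Nat.find_spec h)
  rw [hv]
  have : v ∈ ev n (Nat.find h) := hv
  exact Nat.Partrec.Code.evaln_mono hk this

lemma ev_none_lt (h : Halts n) {k : ℕ} (hk : k < Nat.find h) : ev n k = none :=
  Option.not_isSome_iff_eq_none.mp (Nat.find_min h hk)

lemma ev_none_of_not_halts (h : ¬ Halts n) (k : ℕ) : ev n k = none :=
  Option.not_isSome_iff_eq_none.mp fun hs => h ⟨k, hs⟩

lemma count_of_lt_pred {T : ℕ} {p : ℕ → Prop} [DecidablePred p]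
    (hp : ∀ t, p t ↔ t < T) (m : ℕ) : Nat.count p m = min T m := by
  induction m with
  | zero => simp
  | succ m ih =>
      rw [Nat.count_succ, ih]
      by_cases hm : m < T
      · rw [if_pos ((hp m).mpr hm)]; omega
      · rw [if_neg (fun hc => hm ((hp m).mp hc))]; omega

lemma qc_eq (h : Halts n) {k : ℕ} (hk : Nat.find h ≤ k) : qc n k = Nat.find h := by
  have hp : ∀ t, (ev n t = none) ↔ t < Nat.find h := by
    intro t
    constructor
    · intro ht
      by_contra hlt
      have h1 := ev_stable h (le_of_not_gt hlt)
      rw [ht] at h1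
      have h2 := Nat.find_spec h
      rw [← h1] at h2
      simp at h2
    · exact fun ht => ev_none_lt h ht
  rw [qc, count_of_lt_pred hp]
  omega

lemma CC_of_lt (h : Halts n) {k : ℕ} (hk : k < Nat.find h) : CC n k = 0 := by
  unfold CC; rw [ev_none_lt h hk]

lemma CC_of_ge (h : Halts n) {v : ℕ} (hv : ev n (Nat.find h) = some v) {k : ℕ}
    (hk : Nat.find h ≤ k) :
    CC n k = (if v = 0 then 1 else -1) * (2 : ℚ)⁻¹ ^ (Nat.find h) := by
  unfold CC
  rw [ev_stable h hk, hv, qc_eq h hk]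

lemma CC_not_halts (h : ¬ Halts n) (k : ℕ) : CC n k = 0 := by
  unfold CC; rw [ev_none_of_not_halts h k]

lemma abs_val_le {v T m : ℕ} (hm : m ≤ T) :
    |(if v = 0 then 1 else -1) * (2 : ℚ)⁻¹ ^ T| ≤ (2:ℚ)⁻¹ ^ m := by
  have h1 : |(if v = 0 then (1:ℚ) else -1) * (2 : ℚ)⁻¹ ^ T| = (2:ℚ)⁻¹ ^ T := by
    rw [abs_mul]
    have h2 : |(if v = 0 then (1:ℚ) else -1)| = 1 := by split <;> norm_num
    rw [h2, one_mul, abs_of_nonneg (by positivity)]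
  rw [h1]
  exact pow_le_pow_of_le_one (by norm_num) (by norm_num) hm

lemma CC_cauchy (n m i j : ℕ) (hi : m ≤ i) (hj : m ≤ j) :
    |CC n i - CC n j| ≤ (2:ℚ)⁻¹ ^ m := by
  by_cases h : Halts n
  · obtain ⟨v, hv⟩ := Option.isSome_iff_exists.mp (Nat.find_spec h)
    set T := Nat.find h with hT
    by_cases hiT : i < T <;> by_cases hjT : j < T
    · rw [CC_of_lt h hiT, CC_of_lt h hjT, sub_zero, abs_zero]
      positivity
    · rw [CC_of_lt h hiT, CC_of_ge h hv (le_of_not_gt hjT), zero_sub, abs_neg]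
      exact abs_val_le (by omega)
    · rw [CC_of_ge h hv (le_of_not_gt hiT), CC_of_lt h hjT, sub_zero]
      exact abs_val_le (by omega)
    · rw [CC_of_ge h hv (le_of_not_gt hiT), CC_of_ge h hv (le_of_not_gt hjT), sub_self,
        abs_zero]
      positivity
  · rw [CC_not_halts h i, CC_not_halts h j, sub_zero, abs_zero]
    positivity

lemma CC_eventually_const (n : ℕ) : ∃ N, ∀ k, N ≤ k → CC n k = Cq n := by
  by_cases h : Halts n
  · obtain ⟨v, hv⟩ := Option.isSome_iff_exists.mp (Nat.find_spec h)
    refine ⟨Nat.find h, fun k hk => ?_⟩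
    rw [CC_of_ge h hv hk]; unfold Cq; rw [dif_pos h, CC_of_ge h hv le_rfl]
  · exact ⟨0, fun k _ => by rw [CC_not_halts h k]; unfold Cq; rw [dif_neg h]⟩

lemma CC_tendsto (n : ℕ) :
    Filter.Tendsto (fun k => ((CC n k : ℝ))) Filter.atTop (nhds ((Cq n : ℝ))) := by
  obtain ⟨N, hN⟩ := CC_eventually_const n
  apply Filter.Tendsto.congr' _ (tendsto_const_nhds (x := ((Cq n : ℝ))))
  filter_upwards [Filter.eventually_atTop.mpr ⟨N, fun k hk => hN k hk⟩] with k hk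
  rw [hk]

lemma Cq_pos (h : Halts n) {v : ℕ} (hv : ev n (Nat.find h) = some v) (hv0 : v = 0) :
    0 < Cq n := by
  unfold Cq; rw [dif_pos h, CC_of_ge h hv le_rfl, hv0, if_pos rfl, one_mul]
  positivity

lemma Cq_neg (h : Halts n) {v : ℕ} (hv : ev n (Nat.find h) = some v) (hv0 : v ≠ 0) :
    Cq n < 0 := by
  unfold Cq; rw [dif_pos h, CC_of_ge h hv le_rfl, if_neg hv0]
  have : (0:ℚ) < (2:ℚ)⁻¹ ^ (Nat.find h) := by positivity
  nlinarith

end analysis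

end CCF

/-- There exist a partial computable function `f : ℕ →. Bool` and a computable family
of pairs of rational sequences `(k ↦ C n k, k ↦ D n k)`, each Cauchy with the identity
modulus, with real limits `C∞ n` and `D∞ n`, such that no computable `g : ℕ → Bool`
satisfies, for all `n`, `g n = false → C∞ n ≤ D∞ n` and `g n = true → D∞ n ≤ C∞ n`. -/
theorem exists_computable_cauchy_family_without_computable_selector :
    ∃ (f : ℕ →. Bool) (C D : ℕ → ℕ → ℚ) (Cinf Dinf : ℕ → ℝ),
      Partrec f ∧
      Computable (fun p : ℕ × ℕ => C p.1 p.2) ∧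
      Computable (fun p : ℕ × ℕ => D p.1 p.2) ∧
      (∀ (n m i j : ℕ), m ≤ i → m ≤ j →
        |C n i - C n j| ≤ (2 : ℚ)⁻¹ ^ m ∧ |D n i - D n j| ≤ (2 : ℚ)⁻¹ ^ m) ∧
      (∀ n : ℕ, Filter.Tendsto (fun k => ((C n k : ℝ))) Filter.atTop (nhds (Cinf n))) ∧
      (∀ n : ℕ, Filter.Tendsto (fun k => ((D n k : ℝ))) Filter.atTop (nhds (Dinf n))) ∧
      ¬ ∃ g : ℕ → Bool, Computable g ∧
        ∀ n : ℕ, (g n = false → Cinf n ≤ Dinf n) ∧ (g n = true → Dinf n ≤ Cinf n) := by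
  classical
  refine ⟨fun _ => Part.some true, CCF.CC, fun _ _ => 0,
    fun n => ((CCF.Cq n : ℝ)), fun _ => 0,
    ?_, CCF.computable_CC, Computable.const 0, ?_, CCF.CC_tendsto, ?_, ?_⟩
  · exact (Computable.const true).partrec
  · intro n m i j hi hj
    refine ⟨CCF.CC_cauchy n m i j hi hj, ?_⟩
    rw [sub_self, abs_zero]
    positivity
  · intro n
    simp only [Rat.cast_zero]
    exact (tendsto_const_nhds :
      Filter.Tendsto (fun _ : ℕ => (0:ℝ)) Filter.atTop (nhds 0))
  · rintro ⟨g, hg, hsel⟩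
    set F : ℕ → ℕ := fun n => bif g n then 1 else 0 with hF
    have hFc : Computable F := Computable.cond hg (Computable.const 1) (Computable.const 0)
    obtain ⟨c, hc⟩ := Nat.Partrec.Code.exists_code.mp (Partrec.nat_iff.mp hFc.partrec)
    set N := Encodable.encode c with hN
    have hofN : Denumerable.ofNat Nat.Partrec.Code N = c := Denumerable.ofNat_encode c
    have hmem : F N ∈ c.eval N := by rw [hc]; exact Part.mem_some (F N)
    obtain ⟨k, hk⟩ := Nat.Partrec.Code.evaln_complete.mp hmem
    have hH : CCF.Halts N := by
      refine ⟨k, ?_⟩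
      rw [CCF.ev, hofN]
      rw [Option.mem_def] at hk
      rw [hk]
      rfl
    obtain ⟨v, hv⟩ := Option.isSome_iff_exists.mp (Nat.find_spec hH)
    have hvF : v = F N := by
      have h1 : v ∈ Nat.Partrec.Code.evaln (Nat.find hH) c N := by
        rw [Option.mem_def, ← hofN]
        exact hv
      have h2 := Nat.Partrec.Code.evaln_sound h1
      rw [hc] at h2
      exact Part.mem_some_iff.mp h2
    cases hgn : g N with
    | false =>
        have hFN : F N = 0 := by rw [hF]; simp [hgn]
        have hpos := CCF.Cq_pos hH hv (by rw [hvF, hFN])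
        have hle : ((CCF.Cq N : ℝ)) ≤ 0 := (hsel N).1 hgn
        have hlt : (0:ℝ) < (CCF.Cq N : ℝ) := by exact_mod_cast hpos
        linarith
    | true =>
        have hFN : F N = 1 := by rw [hF]; simp [hgn]
        have hneg := CCF.Cq_neg hH hv (by rw [hvF, hFN]; norm_num)
        have hge : (0:ℝ) ≤ ((CCF.Cq N : ℝ)) := (hsel N).2 hgn
        have hlt : ((CCF.Cq N : ℝ)) < 0 := by exact_mod_cast hneg
        linarith
end

section
/- Suppose f has no total computable extension. For each n, equip the complete directed graph on three vertices v1, v2, v3 with weights w_n(v1,v2) = C∞ n, w_n(v2,v3) = 1, w_n(v3,v1) = 1, w_n(v1,v3) = 1, w_n(v3,v2) = D∞ n, w_n(v2,v1) = 1. Then there is no computable function g : ℕ → Bool such that for every n, the tour selected by g n (the tour v1 → v2 → v3 → v1 if g n = false, and v1 → v3 → v2 → v1 if g n = true) has minimum cost among all directed Hamiltonian tours with respect to w_n. -/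
open Nat.Partrec (Code)
open Nat.Partrec.Code

lemma find_eq (e : Code) (n : ℕ) (h : ∃ m, (evaln m e n).isSome) (k : ℕ)
    (hk : Nat.find h ≤ k) :
    ∃ hk' : ∃ m, m ≤ k ∧ (evaln m e n).isSome, Nat.find hk' = Nat.find h := by
  have hk' : ∃ m, m ≤ k ∧ (evaln m e n).isSome := ⟨Nat.find h, hk, Nat.find_spec h⟩
  exact ⟨hk', le_antisymm (Nat.find_min' hk' ⟨hk, Nat.find_spec h⟩)
    (Nat.find_min' h (Nat.find_spec hk').2)⟩

lemma Cinf_eq (e : Code) (n : ℕ) (h : ∃ m, (evaln m e n).isSome) :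
    Cinf e n = ((if evaln (Nat.find h) e n = some (Encodable.encode false) then
      1 - (2 : ℚ)⁻¹ ^ (Nat.find h) else 1 : ℚ) : ℝ) := by
  apply Filter.Tendsto.limUnder_eq
  apply tendsto_const_nhds.congr'
  filter_upwards [Filter.eventually_atTop.2 ⟨Nat.find h, fun k hk => hk⟩] with k hk
  obtain ⟨hk', hfind⟩ := find_eq e n h k hk
  rw [Cq, dif_pos hk', hfind]

lemma Dinf_eq (e : Code) (n : ℕ) (h : ∃ m, (evaln m e n).isSome) :
    Dinf e n = ((if evaln (Nat.find h) e n = some (Encodable.encode true) then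
      1 - (2 : ℚ)⁻¹ ^ (Nat.find h) else 1 : ℚ) : ℝ) := by
  apply Filter.Tendsto.limUnder_eq
  apply tendsto_const_nhds.congr'
  filter_upwards [Filter.eventually_atTop.2 ⟨Nat.find h, fun k hk => hk⟩] with k hk
  obtain ⟨hk', hfind⟩ := find_eq e n h k hk
  rw [Dq, dif_pos hk', hfind]
/-- Suppose `f` has no total computable extension. Equip, for each `n`, the complete
directed graph on vertices `v1, v2, v3` with weights `w_n(v1,v2) = C∞ n`,
`w_n(v3,v2) = D∞ n`, and all other roads of weight `1`. Then there is no computable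
`g : ℕ → Bool` such that for every `n` the tour selected by `g n` (namely
`v1 → v2 → v3 → v1` if `g n = false`, and `v1 → v3 → v2 → v1` if `g n = true`)
has minimum cost among all directed Hamiltonian tours (fixed-point-free
permutations of the vertices). -/
theorem no_computable_solver_three_node_tsp (f : ℕ →. Bool) (hf : Partrec f) (e : Code)
    (he : ∀ (n : ℕ) (b : Bool), b ∈ f n ↔ ∃ k, evaln k e n = some (Encodable.encode b))
    (hext : ¬ ∃ g : ℕ → Bool, Computable g ∧
      ∀ (n : ℕ) (b : Bool), f n = Part.some b → g n = b)
    (w : ℕ → Fin 3 → Fin 3 → ℝ)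
    (hw : ∀ n, w n = ![![1, Cinf e n, 1], ![1, 1, 1], ![1, Dinf e n, 1]]) :
    ¬ ∃ g : ℕ → Bool, Computable g ∧
      ∀ n : ℕ, ∀ σ : Equiv.Perm (Fin 3), (∀ x, σ x ≠ x) →
        (∑ x, w n x ((if g n then (finRotate 3)⁻¹ else finRotate 3) x))
          ≤ ∑ x, w n x (σ x) := by
  rintro ⟨g, hg, hmin⟩
  apply hext
  refine ⟨g, hg, fun n b hb => ?_⟩
  have hb' : b ∈ f n := by rw [hb]; exact Part.mem_some b
  obtain ⟨k0, hk0⟩ := (he n b).1 hb'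
  have h : ∃ m, (evaln m e n).isSome := ⟨k0, by simp [hk0]⟩
  have hval : evaln (Nat.find h) e n = some (Encodable.encode b) := by
    obtain ⟨x, hx⟩ := Option.isSome_iff_exists.1 (Nat.find_spec h)
    have h1 : x ∈ evaln (max (Nat.find h) k0) e n :=
      evaln_mono (le_max_left _ _) (Option.mem_def.2 hx)
    have h2 : Encodable.encode b ∈ evaln (max (Nat.find h) k0) e n :=
      evaln_mono (le_max_right _ _) (Option.mem_def.2 hk0)
    rw [hx, Option.mem_unique h1 h2]
  have hr : ((1 - (2 : ℚ)⁻¹ ^ (Nat.find h) : ℚ) : ℝ) < 1 := by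
    push_cast
    have : (0:ℝ) < (2 : ℝ)⁻¹ ^ (Nat.find h) := by positivity
    linarith
  cases b with
  | false =>
    have hC : Cinf e n = ((1 - (2 : ℚ)⁻¹ ^ (Nat.find h) : ℚ) : ℝ) := by
      rw [Cinf_eq e n h, if_pos hval]
    have hD : Dinf e n = 1 := by
      rw [Dinf_eq e n h, if_neg (by rw [hval]; decide)]; norm_num
    by_contra hgn'
    have hgn : g n = true := by revert hgn'; cases g n <;> simp
    have := hmin n (finRotate 3) (by decide)
    rw [hgn, if_pos rfl, hw n] at this
    rw [Fin.sum_univ_three, Fin.sum_univ_three,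
      show (finRotate 3) 0 = 1 from by decide, show (finRotate 3) 1 = 2 from by decide,
      show (finRotate 3) 2 = 0 from by decide,
      show (finRotate 3)⁻¹ (0 : Fin 3) = 2 from by decide,
      show (finRotate 3)⁻¹ (1 : Fin 3) = 0 from by decide,
      show (finRotate 3)⁻¹ (2 : Fin 3) = 1 from by decide] at this
    simp only [Matrix.cons_val_zero, Matrix.cons_val_one, Matrix.head_cons,
      Matrix.cons_val_two, Matrix.tail_cons, Matrix.head_fin_const] at this
    rw [hC, hD] at this
    linarith
  | true =>
    have hC : Cinf e n = 1 := by
      rw [Cinf_eq e n h, if_neg (by rw [hval]; decide)]; norm_num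
    have hD : Dinf e n = ((1 - (2 : ℚ)⁻¹ ^ (Nat.find h) : ℚ) : ℝ) := by
      rw [Dinf_eq e n h, if_pos hval]
    by_contra hgn'
    have hgn : g n = false := by revert hgn'; cases g n <;> simp
    have := hmin n (finRotate 3)⁻¹ (by decide)
    rw [hgn, if_neg (by simp), hw n] at this
    rw [Fin.sum_univ_three, Fin.sum_univ_three,
      show (finRotate 3) 0 = 1 from by decide, show (finRotate 3) 1 = 2 from by decide,
      show (finRotate 3) 2 = 0 from by decide,
      show (finRotate 3)⁻¹ (0 : Fin 3) = 2 from by decide,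
      show (finRotate 3)⁻¹ (1 : Fin 3) = 0 from by decide,
      show (finRotate 3)⁻¹ (2 : Fin 3) = 1 from by decide] at this
    simp only [Matrix.cons_val_zero, Matrix.cons_val_one, Matrix.head_cons,
      Matrix.cons_val_two, Matrix.tail_cons, Matrix.head_fin_const] at this
    rw [hC, hD] at this
    linarith
end

section
/- Suppose f has no total computable extension. For each n, equip the complete graph on five vertices n1, …, n5 with symmetric weights w_n(n1,n2) = 1, w_n(n2,n5) = 1, w_n(n3,n5) = 1, w_n(n4,n5) = 1, w_n(n3,n4) = 1, w_n(n1,n3) = C∞ n, w_n(n1,n4) = D∞ n, w_n(n2,n3) = 100, w_n(n2,n4) = 100, w_n(n1,n5) = 100. Then there is no computable function g : ℕ → Bool such that for every n, the Hamiltonian cycle selected by g n (the cycle n1–n2–n5–n4–n3–n1 if g n = false, and n1–n2–n5–n3–n4–n1 if g n = true) has minimum cost among all Hamiltonian cycles with respect to w_n. -/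
open Nat.Partrec (Code)
open Nat.Partrec.Code

lemma find_stab (e : Code) (n k : ℕ) (h : ∃ m, (evaln m e n).isSome)
    (hk : Nat.find h ≤ k) :
    ∃ hk' : ∃ m, m ≤ k ∧ (evaln m e n).isSome, Nat.find hk' = Nat.find h := by
  have hk' : ∃ m, m ≤ k ∧ (evaln m e n).isSome := ⟨Nat.find h, hk, Nat.find_spec h⟩
  exact ⟨hk', le_antisymm (Nat.find_min' hk' ⟨hk, Nat.find_spec h⟩)
    (Nat.find_min' h (Nat.find_spec hk').2)⟩

lemma eval_find (e : Code) (n : ℕ) (b : Bool) {k0 : ℕ}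
    (hk0 : evaln k0 e n = some (Encodable.encode b))
    (h : ∃ m, (evaln m e n).isSome) :
    evaln (Nat.find h) e n = some (Encodable.encode b) := by
  obtain ⟨v, hv⟩ := Option.isSome_iff_exists.1 (Nat.find_spec h)
  have h1 : v ∈ eval e n := evaln_sound (by exact hv)
  have h2 : Encodable.encode b ∈ eval e n := evaln_sound (by exact hk0)
  rw [hv, Part.mem_unique h1 h2]


/-- Suppose `f` has no total computable extension. Equip, for each `n`, the complete
graph on five vertices `n1, …, n5` with symmetric weights
`w_n(n1,n2) = w_n(n2,n5) = w_n(n3,n5) = w_n(n4,n5) = w_n(n3,n4) = 1`,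
`w_n(n1,n3) = C∞ n`, `w_n(n1,n4) = D∞ n`, `w_n(n2,n3) = w_n(n2,n4) = w_n(n1,n5) = 100`.
Then there is no computable `g : ℕ → Bool` such that for every `n` the Hamiltonian
cycle selected by `g n` (namely `n1–n2–n5–n4–n3–n1` if `g n = false`, and
`n1–n2–n5–n3–n4–n1` if `g n = true`) has minimum cost among all Hamiltonian cycles
(cyclic permutations of the five vertices). -/
theorem no_computable_solver_five_node_symmetric_tsp
    (f : ℕ →. Bool) (hf : Partrec f) (e : Code)
    (he : ∀ (n : ℕ) (b : Bool), b ∈ f n ↔ ∃ k, evaln k e n = some (Encodable.encode b))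
    (hext : ¬ ∃ g : ℕ → Bool, Computable g ∧
      ∀ (n : ℕ) (b : Bool), f n = Part.some b → g n = b)
    (w : ℕ → Fin 5 → Fin 5 → ℝ)
    (hw : ∀ n, w n = ![![0, 1, Cinf e n, Dinf e n, 100],
                       ![1, 0, 100, 100, 1],
                       ![Cinf e n, 100, 0, 1, 1],
                       ![Dinf e n, 100, 1, 0, 1],
                       ![100, 1, 1, 1, 0]]) :
    ¬ ∃ g : ℕ → Bool, Computable g ∧
      ∀ n : ℕ, ∀ σ : Equiv.Perm (Fin 5), σ.IsCycle → (∀ x, σ x ≠ x) →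
        (∑ x, w n x ((if g n then ([0, 1, 4, 2, 3] : List (Fin 5)).formPerm
                      else ([0, 1, 4, 3, 2] : List (Fin 5)).formPerm) x))
          ≤ ∑ x, w n x (σ x) := by
  rintro ⟨g, hg, hopt⟩
  apply hext
  refine ⟨g, hg, ?_⟩
  intro n b hfb
  obtain ⟨k0, hk0⟩ := (he n b).1 (by rw [hfb]; exact Part.mem_some b)
  have h : ∃ m, (evaln m e n).isSome := ⟨k0, by simp [hk0]⟩
  have hval := eval_find e n b hk0 h
  set m0 := Nat.find h with hm0
  -- cost of the two cycles
  have hCf : Cinf e n = ((if b = false then 1 - (2:ℚ)⁻¹ ^ m0 else 1 : ℚ) : ℝ) := by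
    rw [Cinf_eq e n h, hval]
    cases b <;> simp [hm0]
  have hDf : Dinf e n = ((if b = true then 1 - (2:ℚ)⁻¹ ^ m0 else 1 : ℚ) : ℝ) := by
    rw [Dinf_eq e n h, hval]
    cases b <;> simp [hm0]
  have hpow : (0:ℝ) < (2:ℝ)⁻¹ ^ m0 := by positivity
  -- the two cycles
  have hcycT : (([0, 1, 4, 2, 3] : List (Fin 5)).formPerm).IsCycle :=
    List.isCycle_formPerm (by decide) (by decide)
  have hcycF : (([0, 1, 4, 3, 2] : List (Fin 5)).formPerm).IsCycle :=
    List.isCycle_formPerm (by decide) (by decide)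
  have hfixT : ∀ x, (([0, 1, 4, 2, 3] : List (Fin 5)).formPerm) x ≠ x := by decide
  have hfixF : ∀ x, (([0, 1, 4, 3, 2] : List (Fin 5)).formPerm) x ≠ x := by decide
  cases b with
  | false =>
    by_contra hgn
    have hgt : g n = true := by simpa using hgn
    have := hopt n _ hcycF hfixF
    rw [hgt, if_pos rfl, hw n, Fin.sum_univ_five, Fin.sum_univ_five] at this
    have eT0 : (([0, 1, 4, 2, 3] : List (Fin 5)).formPerm) 0 = 1 := by decide
    have eT1 : (([0, 1, 4, 2, 3] : List (Fin 5)).formPerm) 1 = 4 := by decide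
    have eT2 : (([0, 1, 4, 2, 3] : List (Fin 5)).formPerm) 2 = 3 := by decide
    have eT3 : (([0, 1, 4, 2, 3] : List (Fin 5)).formPerm) 3 = 0 := by decide
    have eT4 : (([0, 1, 4, 2, 3] : List (Fin 5)).formPerm) 4 = 2 := by decide
    have eF0 : (([0, 1, 4, 3, 2] : List (Fin 5)).formPerm) 0 = 1 := by decide
    have eF1 : (([0, 1, 4, 3, 2] : List (Fin 5)).formPerm) 1 = 4 := by decide
    have eF2 : (([0, 1, 4, 3, 2] : List (Fin 5)).formPerm) 2 = 0 := by decide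
    have eF3 : (([0, 1, 4, 3, 2] : List (Fin 5)).formPerm) 3 = 2 := by decide
    have eF4 : (([0, 1, 4, 3, 2] : List (Fin 5)).formPerm) 4 = 3 := by decide
    rw [eT0, eT1, eT2, eT3, eT4, eF0, eF1, eF2, eF3, eF4] at this
    simp only [Matrix.cons_val_zero, Matrix.cons_val_one, Matrix.head_cons,
      Matrix.cons_val_two, Matrix.cons_val_three, Matrix.cons_val_four,
      Matrix.tail_cons, Matrix.head_fin_const] at this
    rw [hCf, hDf] at this
    simp only [if_pos rfl, if_neg (by decide : ¬ (false = true))] at this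
    push_cast at this
    linarith
  | true =>
    by_contra hgn
    have hgt : g n = false := by simpa using hgn
    have := hopt n _ hcycT hfixT
    rw [hgt, if_neg (by decide), hw n, Fin.sum_univ_five, Fin.sum_univ_five] at this
    have eT0 : (([0, 1, 4, 2, 3] : List (Fin 5)).formPerm) 0 = 1 := by decide
    have eT1 : (([0, 1, 4, 2, 3] : List (Fin 5)).formPerm) 1 = 4 := by decide
    have eT2 : (([0, 1, 4, 2, 3] : List (Fin 5)).formPerm) 2 = 3 := by decide
    have eT3 : (([0, 1, 4, 2, 3] : List (Fin 5)).formPerm) 3 = 0 := by decide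
    have eT4 : (([0, 1, 4, 2, 3] : List (Fin 5)).formPerm) 4 = 2 := by decide
    have eF0 : (([0, 1, 4, 3, 2] : List (Fin 5)).formPerm) 0 = 1 := by decide
    have eF1 : (([0, 1, 4, 3, 2] : List (Fin 5)).formPerm) 1 = 4 := by decide
    have eF2 : (([0, 1, 4, 3, 2] : List (Fin 5)).formPerm) 2 = 0 := by decide
    have eF3 : (([0, 1, 4, 3, 2] : List (Fin 5)).formPerm) 3 = 2 := by decide
    have eF4 : (([0, 1, 4, 3, 2] : List (Fin 5)).formPerm) 4 = 3 := by decide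
    rw [eT0, eT1, eT2, eT3, eT4, eF0, eF1, eF2, eF3, eF4] at this
    simp only [Matrix.cons_val_zero, Matrix.cons_val_one, Matrix.head_cons,
      Matrix.cons_val_two, Matrix.cons_val_three, Matrix.cons_val_four,
      Matrix.tail_cons, Matrix.head_fin_const] at this
    rw [hCf, hDf] at this
    simp only [if_pos rfl, if_neg (by decide : ¬ (true = false))] at this
    push_cast at this
    linarith
end
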